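/- Let L be a complete lattice with its Scott topology and the join-cone structure. If the binary join ∨ : L × L → L is jointly continuous (with respect to the Scott topologies), then the map β : V_w L → L sending each continuous valuation ν to ⋁ supp ν is continuous with respect to the weak topology on V_w L and the Scott topology on L. -/

import Mathlib

open Set ENNReal NNReal TopologicalSpace MeasureTheory
open scoped Classical

/-- A continuous valuation on a topological space `X`: a strict, monotone, modular,
Scott-continuous map from the open sets of `X` to `ℝ≥0∞`. -/
structure ContValuation (X : Type*) [TopologicalSpace X] where
  toFun : Opens X → ℝ≥0∞
  strict' : toFun ⊥ = 0
  mono' : ∀ U V : Opens X, U ≤ V → toFun U ≤ toFun V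
  modular' : ∀ U V : Opens X, toFun U + toFun V = toFun (U ⊔ V) + toFun (U ⊓ V)
  scott' : ∀ S : Set (Opens X), S.Nonempty → DirectedOn (· ≤ ·) S →
    toFun (sSup S) = ⨆ U ∈ S, toFun U

/-- The stochastic order on continuous valuations: pointwise order on open sets. -/
def stochLE {X : Type*} [TopologicalSpace X] (μ ν : ContValuation X) : Prop :=
  ∀ U : Opens X, μ.toFun U ≤ ν.toFun U

/-- The weak topology on the set of continuous valuations on `X`, generated by the
subbasic sets `[U > r] = {μ | μ(U) > r}`, for `U` open in `X` and `r` a nonnegative real. -/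
def weakTopology (X : Type*) [TopologicalSpace X] : TopologicalSpace (ContValuation X) :=
  .generateFrom
    {A | ∃ (U : Opens X) (r : ℝ≥0), A = {μ : ContValuation X | (r : ℝ≥0∞) < μ.toFun U}}

/-- `V_w X`: the space of continuous valuations carries the weak topology. -/
instance (X : Type*) [TopologicalSpace X] : TopologicalSpace (ContValuation X) :=
  weakTopology X

/-- The support of a continuous valuation `ν`: the complement of the largest open set of
`ν`-measure zero. -/
def ContValuation.supp {X : Type*} [TopologicalSpace X] (ν : ContValuation X) : Set X :=
  (↑(sSup {U : Opens X | ν.toFun U = 0}) : Set X)ᶜ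

/-- The sup of all null opens is null. -/
lemma ContValuation.null_sSup {X : Type*} [TopologicalSpace X] (ν : ContValuation X) :
    ν.toFun (sSup {U : Opens X | ν.toFun U = 0}) = 0 := by
  have hdir : DirectedOn (· ≤ ·) {U : Opens X | ν.toFun U = 0} := by
    intro U hU V hV
    refine ⟨U ⊔ V, ?_, le_sup_left, le_sup_right⟩
    have : ν.toFun (U ⊔ V) + ν.toFun (U ⊓ V) = 0 := by
      rw [← ν.modular' U V, hU, hV, add_zero]
    exact (add_eq_zero.mp this).1
  rw [ν.scott' _ ⟨⊥, ν.strict'⟩ hdir]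
  simp only [mem_setOf_eq, ENNReal.iSup_eq_zero]
  exact fun U hU => hU

/-- An open set meets the support iff it has nonzero measure. -/
lemma ContValuation.meets_supp_iff {X : Type*} [TopologicalSpace X] (ν : ContValuation X)
    (U : Opens X) : ((U : Set X) ∩ ν.supp).Nonempty ↔ ν.toFun U ≠ 0 := by
  rw [ContValuation.supp, Set.inter_compl_nonempty_iff]
  constructor
  · intro h h0
    exact h (SetLike.coe_subset_coe.mpr (le_sSup h0))
  · intro h0 hsub
    exact h0 (le_antisymm (le_trans (ν.mono' _ _ (SetLike.coe_subset_coe.mp hsub))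
      (le_of_eq ν.null_sSup)) zero_le)

/-- Tube lemma for finite joins, by induction, using joint continuity of `⊔`. -/
lemma finset_sup_tube {L : Type*} [CompleteLattice L] [TopologicalSpace L]
    (hjoin : Continuous fun p : L × L => p.1 ⊔ p.2) (F : Finset L) :
    ∀ W : Set L, IsOpen W → F.sup id ∈ W →
    ∃ U : L → Set L, (∀ x ∈ F, IsOpen (U x) ∧ x ∈ U x) ∧
      ∀ g : L → L, (∀ x ∈ F, g x ∈ U x) → F.sup g ∈ W := by
  induction F using Finset.induction with
  | empty =>
    intro W hW h
    exact ⟨fun _ => Set.univ, by simp, fun g _ => by simpa using h⟩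
  | @insert a F ha ih =>
    intro W hW h
    rw [Finset.sup_insert] at h
    have hWo : IsOpen ((fun p : L × L => p.1 ⊔ p.2) ⁻¹' W) := hW.preimage hjoin
    obtain ⟨A, B, hA, hB, haA, hbB, hAB⟩ := isOpen_prod_iff.mp hWo a (F.sup id) h
    obtain ⟨U, hU, hUg⟩ := ih B hB hbB
    refine ⟨fun x => if x = a then A else U x, ?_, ?_⟩
    · intro x hx
      rcases Finset.mem_insert.mp hx with rfl | hx
      · simpa using ⟨hA, haA⟩
      · have hxa : x ≠ a := fun h' => ha (h' ▸ hx)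
        simpa [hxa] using hU x hx
    · intro g hg
      rw [Finset.sup_insert]
      have h1 : g a ∈ A := by simpa using hg a (Finset.mem_insert_self a F)
      have h2 : F.sup g ∈ B := by
        refine hUg g fun x hx => ?_
        have hxa : x ≠ a := fun h' => ha (h' ▸ hx)
        simpa [hxa] using hg x (Finset.mem_insert.mpr (Or.inr hx))
      exact hAB (Set.mk_mem_prod h1 h2)

/-- Let `L` be a complete lattice with its Scott topology. If the binary join
`∨ : L × L → L` is jointly continuous, then the map `β : V_w L → L` sending each
continuous valuation `ν` to `⋁ supp ν` is continuous, from the weak topology on `V_w L`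
to the Scott topology on `L`. -/
theorem joinCone_barycentre_map_continuous
    (L : Type*) [CompleteLattice L] [TopologicalSpace L] [Topology.IsScott L Set.univ]
    (hjoin : Continuous fun p : L × L => p.1 ⊔ p.2) :
    Continuous (fun ν : ContValuation L => sSup ν.supp) := by
  rw [continuous_def]
  intro W hW
  obtain ⟨hWup, hWdir⟩ :=
    (Topology.IsScott.isOpen_iff_isUpperSet_and_dirSupInaccOn (D := Set.univ)).mp hW
  rw [dirSupInaccOn_univ] at hWdir
  rw [isOpen_iff_forall_mem_open]
  intro ν hν
  simp only [mem_preimage] at hν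
  -- the directed set of finite joins of elements of the support
  set D : Set L := {x | ∃ F : Finset L, ↑F ⊆ ν.supp ∧ x = F.sup id} with hDdef
  have hDne : D.Nonempty := ⟨⊥, ∅, by simp⟩
  have hDdir : DirectedOn (· ≤ ·) D := by
    rintro _ ⟨F, hF, rfl⟩ _ ⟨G, hG, rfl⟩
    refine ⟨(F ∪ G).sup id, ⟨F ∪ G, ?_, rfl⟩, ?_, ?_⟩
    · rw [Finset.coe_union]; exact Set.union_subset hF hG
    · exact Finset.sup_mono Finset.subset_union_left
    · exact Finset.sup_mono Finset.subset_union_right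
  have hlub : IsLUB D (sSup ν.supp) := by
    constructor
    · rintro _ ⟨F, hF, rfl⟩
      exact Finset.sup_le fun b hb => le_sSup (hF hb)
    · intro u hu
      refine sSup_le fun a haS => hu ⟨{a}, by simpa using haS, by simp⟩
  obtain ⟨_, ⟨F, hF, rfl⟩, hxW⟩ := hWdir hDne hDdir hlub hν
  obtain ⟨U, hU, hUg⟩ := finset_sup_tube hjoin F W hW hxW
  -- package the tube opens as `Opens`
  have hO : ∀ x ∈ F, ∃ O : Opens L, (O : Set L) = U x := fun x hx => ⟨⟨U x, (hU x hx).1⟩, rfl⟩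
  choose! O hOeq using hO
  refine ⟨⋂ x ∈ F, {μ : ContValuation L | ((0 : ℝ≥0) : ℝ≥0∞) < μ.toFun (O x)}, ?_, ?_, ?_⟩
  · -- the neighborhood is contained in the preimage
    intro μ hμ
    simp only [Set.mem_iInter, mem_setOf_eq] at hμ
    have hmeets : ∀ x ∈ F, ((U x) ∩ μ.supp).Nonempty := by
      intro x hx
      have := (μ.meets_supp_iff (O x)).mpr (by
        have := hμ x hx
        simpa using (pos_iff_ne_zero.mp (by simpa using this)))
      rwa [hOeq x hx] at this
    set g : L → L := fun x => if h : ((U x) ∩ μ.supp).Nonempty then h.choose else ⊥ with hg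
    have hgx : ∀ x ∈ F, g x ∈ U x ∧ g x ∈ μ.supp := by
      intro x hx
      have hne := hmeets x hx
      simp only [hg, dif_pos hne]
      exact hne.choose_spec
    have hsup : F.sup g ∈ W := hUg g fun x hx => (hgx x hx).1
    have hle : F.sup g ≤ sSup μ.supp :=
      Finset.sup_le fun x hx => le_sSup (hgx x hx).2
    exact hWup hle hsup
  · -- it is open in the weak topology
    refine F.finite_toSet.isOpen_biInter fun x hx => ?_
    exact TopologicalSpace.isOpen_generateFrom_of_mem ⟨O x, 0, rfl⟩
  · -- it contains ν
    simp only [Set.mem_iInter, mem_setOf_eq]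
    intro x hx
    have hxsupp : x ∈ (↑(O x) ∩ ν.supp) := by
      rw [hOeq x hx]
      exact ⟨(hU x hx).2, hF hx⟩
    have := (ν.meets_supp_iff (O x)).mp ⟨x, hxsupp⟩
    simpa using pos_iff_ne_zero.mpr this
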